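/- Let a = (a₁,a₂), b = (b₁,b₂) ∈ B_PD \ {(1,2.5),(2.5,1)} and ε₁, ε₂ > 0. If a₁ < b₁ ≤ 2, then every trajectory (x̄_t)_{t≥1} of the dynamical system induced by the profile (s₁^{a,ε₁}, s₂^{b,ε₂}), from any initial point in 𝔖, converges to b as t → ∞. -/

import Mathlib

/- Semi-cooperative strategies in the repeated Prisoner's Dilemma (Section 4 of the
   paper). Actions: `true` = C (cooperate), `false` = D (defect). The payoff plane
   is the Euclidean plane ℝ². -/

/-- The Euclidean plane. -/
abbrev E2 := EuclideanSpace ℝ (Fin 2)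

/-- The point (a, b) of the Euclidean plane. -/
noncomputable def pt (a b : ℝ) : E2 := (WithLp.equiv 2 (Fin 2 → ℝ)).symm ![a, b]

/-- The vector payoff function of the Prisoner's Dilemma:
    u(C,C)=(2,2), u(C,D)=(0,3), u(D,C)=(3,0), u(D,D)=(1,1). -/
noncomputable def payoffPD : Bool → Bool → E2
  | true,  true  => pt 2 2
  | true,  false => pt 0 3
  | false, true  => pt 3 0
  | false, false => pt 1 1

/-- 𝔖 = conv{(2,2),(0,3),(3,0),(1,1)}. -/
def SPD : Set E2 := convexHull ℝ {pt 2 2, pt 0 3, pt 3 0, pt 1 1}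

/-- The set of β-core payoffs of the Prisoner's Dilemma:
    {(x, 3−x/2) : 1 ≤ x ≤ 2} ∪ {(3−y/2, y) : 1 ≤ y ≤ 2}. -/
def BPD : Set E2 :=
  {p | ∃ x : ℝ, 1 ≤ x ∧ x ≤ 2 ∧ p = pt x (3 - x / 2)} ∪
  {p | ∃ y : ℝ, 1 ≤ y ∧ y ≤ 2 ∧ p = pt (3 - y / 2) y}

/-- T₁(v) = {x ∈ 𝔖 : x₂ ≤ ((v₂−1)/(v₁−1))·x₁ + (v₁−v₂)/(v₁−1)}. -/
def T1 (v : E2) : Set E2 :=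
  {x ∈ SPD | x 1 ≤ (v 1 - 1) / (v 0 - 1) * x 0 + (v 0 - v 1) / (v 0 - 1)}

/-- T₂(v) = {x ∈ 𝔖 : x₂ ≥ ((v₂−1)/(v₁−1))·x₁ + (v₁−v₂)/(v₁−1)}. -/
def T2 (v : E2) : Set E2 :=
  {x ∈ SPD | (v 1 - 1) / (v 0 - 1) * x 0 + (v 0 - v 1) / (v 0 - 1) ≤ x 1}

/-- K₁(v,ε) = T₁(v)^ε ∩ {x ∈ 𝔖 : x₁ ≥ 1 and x₂ ≤ v₂}, where `·^ε` is the closed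
ε-neighbourhood. -/
def K1 (v : E2) (ε : ℝ) : Set E2 :=
  Metric.cthickening ε (T1 v) ∩ {x ∈ SPD | 1 ≤ x 0 ∧ x 1 ≤ v 1}

/-- K₂(v,ε) = T₂(v)^ε ∩ {x ∈ 𝔖 : x₁ ≤ v₁ and x₂ ≥ 1}. -/
def K2 (v : E2) (ε : ℝ) : Set E2 :=
  Metric.cthickening ε (T2 v) ∩ {x ∈ SPD | x 0 ≤ v 0 ∧ 1 ≤ x 1}

open Classical in
/-- The semi-cooperative strategy of player 1 determined by `v` and `ε`:
play C iff the current average payoff lies in K₁(v,ε). -/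
noncomputable def semi1 (v : E2) (ε : ℝ) (x : E2) : Bool :=
  if x ∈ K1 v ε then true else false

open Classical in
/-- The semi-cooperative strategy of player 2 determined by `v` and `ε`:
play C iff the current average payoff lies in K₂(v,ε). -/
noncomputable def semi2 (v : E2) (ε : ℝ) (x : E2) : Bool :=
  if x ∈ K2 v ε then true else false

/-- `x` is the trajectory (sequence of average payoffs), indexed from stage 1, of the
dynamical system induced by `f = u ∘ s`, starting at `x 1 ∈ 𝔖`:
x̄_{t+1} = (t·x̄_t + f(x̄_t))/(t+1). -/
def IsTrajPD (f : E2 → E2) (x : ℕ → E2) : Prop :=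
  x 1 ∈ SPD ∧ ∀ t : ℕ, 1 ≤ t →
    x (t + 1) = ((t : ℝ) + 1)⁻¹ • ((t : ℝ) • x t + f (x t))

open Filter

section auxiliary

lemma pt0' (a b : ℝ) : pt a b 0 = a := rfl
lemma pt1' (a b : ℝ) : pt a b 1 = b := rfl

lemma dist_eq2 (x y : E2) : dist x y = Real.sqrt ((x 0 - y 0)^2 + (x 1 - y 1)^2) := by
  rw [EuclideanSpace.dist_eq, Fin.sum_univ_two, Real.dist_eq, Real.dist_eq, sq_abs, sq_abs]

lemma mem_SPD_iff {x : E2} : x ∈ SPD ↔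
    3 ≤ 2 * x 0 + x 1 ∧ 2 * x 0 + x 1 ≤ 6 ∧ 3 ≤ x 0 + 2 * x 1 ∧ x 0 + 2 * x 1 ≤ 6 := by
  constructor
  · intro hx
    have hconv : Convex ℝ {y : E2 | 3 ≤ 2 * y 0 + y 1 ∧ 2 * y 0 + y 1 ≤ 6 ∧
        3 ≤ y 0 + 2 * y 1 ∧ y 0 + 2 * y 1 ≤ 6} := by
      intro p hp q hq s t hs ht hst
      have e0 : (s • p + t • q) 0 = s * p 0 + t * q 0 := by simp
      have e1 : (s • p + t • q) 1 = s * p 1 + t * q 1 := by simp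
      simp only [Set.mem_setOf_eq] at hp hq ⊢
      rw [e0, e1]
      obtain ⟨h1, h2, h3, h4⟩ := hp; obtain ⟨g1, g2, g3, g4⟩ := hq
      refine ⟨by nlinarith, by nlinarith, by nlinarith, by nlinarith⟩
    refine convexHull_min ?_ hconv hx
    intro y hy
    simp only [Set.mem_insert_iff, Set.mem_singleton_iff] at hy
    rcases hy with h|h|h|h <;> subst h <;>
      simp [Set.mem_setOf_eq, pt0', pt1'] <;> norm_num
  · rintro ⟨h1, h2, h3, h4⟩
    have key : ∀ u : E2, u 1 ≥ u 0 → 3 ≤ 2 * u 0 + u 1 → u 0 + 2 * u 1 ≤ 6 →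
        u ∈ SPD := by
      intro u hu h1' h4'
      have hcc : Convex ℝ SPD := convex_convexHull ℝ _
      have m1 : pt 1 1 ∈ SPD := subset_convexHull ℝ _ (by simp)
      have m2 : pt 2 2 ∈ SPD := subset_convexHull ℝ _ (by simp)
      have m3 : pt 0 3 ∈ SPD := subset_convexHull ℝ _ (by simp)
      have := hcc.sum_mem (t := Finset.range 3)
        (w := fun i => if i = 0 then (6 - u 0 - 2 * u 1)/3
          else if i = 1 then (2 * u 0 + u 1 - 3)/3 else (u 1 - u 0)/3)
        (z := fun i => if i = 0 then pt 1 1 else if i = 1 then pt 2 2 else pt 0 3)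
        (by intro i hi
            fin_cases hi <;> simp <;> linarith)
        (by simp [Finset.sum_range_succ]; ring)
        (by intro i hi; fin_cases hi <;> simp [m1, m2, m3])
      convert this using 1
      rw [Finset.sum_range_succ, Finset.sum_range_succ, Finset.sum_range_one]
      ext i
      fin_cases i <;> simp [pt0', pt1', pt] <;> ring
    by_cases hc : x 1 ≥ x 0
    · exact key x hc h1 h4
    · have hsw : ∀ u : E2, u ∈ SPD → pt (u 1) (u 0) ∈ SPD := by
        intro u hu
        have hcv : Convex ℝ {y : E2 | pt (y 1) (y 0) ∈ SPD} := by
          intro p hp q hq s t hs ht hst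
          simp only [Set.mem_setOf_eq] at hp hq ⊢
          have he : pt ((s • p + t • q) 1) ((s • p + t • q) 0)
              = s • pt (p 1) (p 0) + t • pt (q 1) (q 0) := by
            ext i; fin_cases i <;> simp [pt]
          rw [he]
          exact (convex_convexHull ℝ _) hp hq hs ht hst
        refine convexHull_min ?_ hcv hu
        intro y hy
        simp only [Set.mem_insert_iff, Set.mem_singleton_iff] at hy
        rcases hy with h|h|h|h <;> subst h <;>
          · show pt _ _ ∈ SPD
            refine subset_convexHull ℝ _ ?_
            simp [pt0', pt1']
      have hm : pt (x 1) (x 0) ∈ SPD := by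
        refine key (pt (x 1) (x 0)) ?_ ?_ ?_ <;> simp [pt0', pt1'] <;> linarith
      have := hsw _ hm
      convert this using 1
      ext i; fin_cases i <;> rfl

open Filter in
lemma driftUp (y g : ℕ → ℝ) (M θ γ : ℝ) (T : ℕ)
    (hrec : ∀ t, T ≤ t → y (t+1) = ((t:ℝ) * y t + g t)/((t:ℝ)+1))
    (hy : ∀ t, T ≤ t → -M ≤ y t) (hyM : ∀ t, T ≤ t → y t ≤ M)
    (hgM : ∀ t, T ≤ t → g t ≤ M)
    (hg : ∀ t, T ≤ t → θ < y t → g t ≤ γ)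
    {δ : ℝ} (hδ : 0 < δ) :
    ∃ T', ∀ t, T' ≤ t → y t ≤ max θ γ + δ := by
  set L := max θ γ with hL
  have hγL : γ ≤ L := le_max_right _ _
  have hθL : θ ≤ L := le_max_left _ _
  obtain ⟨T₀, hT₀T, hT₀M⟩ : ∃ T₀ : ℕ, T ≤ T₀ ∧ 2*M ≤ δ * ((T₀:ℝ)) := by
    obtain ⟨n, hn⟩ := exists_nat_ge (2*M/δ)
    refine ⟨max T n, le_max_left _ _, ?_⟩
    have h2 : (2*M/δ) ≤ ((max T n : ℕ):ℝ) := by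
      refine le_trans hn ?_
      exact_mod_cast Nat.cast_le.2 (le_max_right T n)
    calc 2*M = (2*M/δ)*δ := by field_simp
    _ ≤ ((max T n : ℕ):ℝ) * δ := mul_le_mul_of_nonneg_right h2 hδ.le
    _ = δ * _ := by ring
  have step : ∀ t, T₀ ≤ t → y t ≤ L + δ → y (t+1) ≤ L + δ := by
    intro t ht hyt
    have htT : T ≤ t := le_trans hT₀T ht
    have htpos : (0:ℝ) ≤ (t:ℝ) := Nat.cast_nonneg t
    rw [hrec t htT, div_le_iff₀ (by positivity)]
    by_cases hc : θ < y t
    · have hgγ := hg t htT hc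
      nlinarith
    · push_neg at hc
      have h1 : -M ≤ y t := hy t htT
      have h2 : g t ≤ M := hgM t htT
      have h3 : 2*M ≤ δ * ((t:ℝ)) := by
        refine le_trans hT₀M (mul_le_mul_of_nonneg_left ?_ hδ.le)
        exact_mod_cast ht
      nlinarith
  have phase1 : ∃ t₀, T₀ ≤ t₀ ∧ y t₀ ≤ L + δ := by
    by_contra hcon
    push_neg at hcon
    have hdec : ∀ n : ℕ, y (T₀ + n) ≤ y T₀ - δ * ∑ i ∈ Finset.range n, 1/((T₀:ℝ)+i+1) := by
      intro n
      induction n with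
      | zero => simp
      | succ n ih =>
        have htT : T ≤ T₀ + n := le_trans hT₀T (Nat.le_add_right _ _)
        have hb := hcon (T₀+n) (Nat.le_add_right _ _)
        have hgγ := hg (T₀+n) htT (lt_of_le_of_lt (by linarith) hb)
        have hstep : y (T₀+n+1) ≤ y (T₀+n) - δ/((T₀:ℝ)+n+1) := by
          rw [hrec (T₀+n) htT]
          have hcast : ((T₀+n : ℕ):ℝ) = (T₀:ℝ)+n := by push_cast; ring
          rw [hcast, div_le_iff₀ (by positivity)]
          have hdd : 0 < (T₀:ℝ)+n+1 := by positivity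
          have hyb : L + δ < y (T₀+n) := hb
          have c1 : (0:ℝ) ≤ (T₀:ℝ) := Nat.cast_nonneg T₀
          have c2 : (0:ℝ) ≤ (n:ℝ) := Nat.cast_nonneg n
          have c3 : δ/((T₀:ℝ)+n+1) * ((T₀:ℝ)+n+1) = δ := by field_simp
          nlinarith
        calc y (T₀ + (n+1)) = y (T₀+n+1) := by rw [Nat.add_succ]
        _ ≤ y (T₀+n) - δ/((T₀:ℝ)+n+1) := hstep
        _ ≤ (y T₀ - δ * ∑ i ∈ Finset.range n, 1/((T₀:ℝ)+i+1)) - δ/((T₀:ℝ)+n+1) := by linarith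
        _ = y T₀ - δ * ∑ i ∈ Finset.range (n+1), 1/((T₀:ℝ)+i+1) := by
            rw [Finset.sum_range_succ]; ring
    have hdiv : Tendsto (fun n => ∑ i ∈ Finset.range n, 1/((T₀:ℝ)+i+1)) atTop atTop := by
      have h0 : Tendsto (fun n => ∑ i ∈ Finset.range n, (1/((i:ℝ)+1))) atTop atTop :=
        Real.tendsto_sum_range_one_div_nat_succ_atTop
      have key : ∀ n, (1/((T₀:ℝ)+1)) * ∑ i ∈ Finset.range n, (1/((i:ℝ)+1))
          ≤ ∑ i ∈ Finset.range n, 1/((T₀:ℝ)+i+1) := by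
        intro n
        rw [Finset.mul_sum]
        apply Finset.sum_le_sum
        intro i _
        rw [div_mul_div_comm, one_mul]
        apply one_div_le_one_div_of_le (by positivity)
        nlinarith [Nat.cast_nonneg (α := ℝ) T₀, Nat.cast_nonneg (α := ℝ) i]
      exact tendsto_atTop_mono key (Tendsto.const_mul_atTop (by positivity) h0)
    obtain ⟨n, hn⟩ := (tendsto_atTop.1 hdiv (2*M/δ + 1)).exists
    have h1 := hdec n
    have h2 : y T₀ ≤ M := hyM T₀ hT₀T
    have h3 : -M ≤ y (T₀+n) := hy _ (le_trans hT₀T (Nat.le_add_right _ _))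
    have h4 : δ * (2*M/δ+1) ≤ δ * ∑ i ∈ Finset.range n, 1/((T₀:ℝ)+i+1) :=
      mul_le_mul_of_nonneg_left hn hδ.le
    have h5 : δ * (2*M/δ+1) = 2*M + δ := by field_simp
    nlinarith
  obtain ⟨t₀, ht₀, hy₀⟩ := phase1
  refine ⟨t₀, fun t ht => ?_⟩
  obtain ⟨k, rfl⟩ := Nat.exists_eq_add_of_le ht
  induction k with
  | zero => simpa using hy₀
  | succ k ih =>
    have h := step (t₀+k) (le_trans ht₀ (Nat.le_add_right _ _)) (ih (Nat.le_add_right _ _))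
    rw [Nat.add_succ]
    exact h

open Filter in
lemma driftDown (y g : ℕ → ℝ) (M θ γ : ℝ) (T : ℕ)
    (hrec : ∀ t, T ≤ t → y (t+1) = ((t:ℝ) * y t + g t)/((t:ℝ)+1))
    (hy : ∀ t, T ≤ t → -M ≤ y t) (hyM : ∀ t, T ≤ t → y t ≤ M)
    (hgM : ∀ t, T ≤ t → -M ≤ g t)
    (hg : ∀ t, T ≤ t → y t < θ → γ ≤ g t)
    {δ : ℝ} (hδ : 0 < δ) :
    ∃ T', ∀ t, T' ≤ t → min θ γ - δ ≤ y t := by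
  obtain ⟨T', hT'⟩ := driftUp (fun t => -y t) (fun t => -g t) M (-θ) (-γ) T
    (by intro t ht; rw [hrec t ht]; ring)
    (by intro t ht; simp only [neg_le_neg_iff]; exact hyM t ht)
    (by intro t ht; simp only [neg_le]; exact hy t ht)
    (by intro t ht; simp only [neg_le]; exact hgM t ht)
    (by intro t ht h; simp only [neg_le_neg_iff]; exact hg t ht (by linarith))
    hδ
  refine ⟨T', fun t ht => ?_⟩
  have h := hT' t ht
  have hmm : max (-θ) (-γ) = -(min θ γ) := by
    rcases le_total θ γ with hh|hh <;> simp [max_def, min_def, hh]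
  rw [hmm] at h
  linarith

section geom
variable {v : E2} {ε : ℝ}

lemma slope_pos (h1 : 1 < v 0) (h2 : v 0 ≤ 2) (hv : v 1 = 3 - v 0 / 2) :
    1 ≤ (v 1 - 1) / (v 0 - 1) := by
  rw [le_div_iff₀ (by linarith)]
  nlinarith

lemma intercept_eq (h1 : 1 < v 0) :
    (v 0 - v 1) / (v 0 - 1) = 1 - (v 1 - 1) / (v 0 - 1) := by
  have h : v 0 - 1 ≠ 0 := by linarith
  field_simp
  ring

lemma lineK1 (h1 : 1 < v 0) (h2 : v 0 ≤ 2) (hv : v 1 = 3 - v 0 / 2) (hε : 0 < ε)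
    {x : E2} (hx : x ∈ SPD) (hx0 : 1 ≤ x 0) (hx1 : x 1 ≤ v 1)
    (hl : x 1 - (1 + (v 1 - 1) / (v 0 - 1) * (x 0 - 1)) ≤ ε) : x ∈ K1 v ε := by
  set m := (v 1 - 1) / (v 0 - 1) with hm
  have hmv : 1 ≤ m := slope_pos h1 h2 hv
  have hline : m * x 0 + (v 0 - v 1)/(v 0 - 1) = 1 + m * (x 0 - 1) := by
    rw [intercept_eq h1]; ring
  refine ⟨?_, hx, hx0, hx1⟩
  set l := x 1 - (1 + m * (x 0 - 1)) with hldef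
  by_cases hc : l ≤ 0
  · apply Metric.self_subset_cthickening
    exact ⟨hx, by rw [hline]; linarith⟩
  · push_neg at hc
    obtain ⟨s1, s2, s3, s4⟩ := mem_SPD_iff.1 hx
    have hz : pt (x 0) (x 1 - l) ∈ T1 v := by
      constructor
      · rw [mem_SPD_iff]
        rw [pt0', pt1']
        have e : x 1 - l = 1 + m * (x 0 - 1) := by rw [hldef]; ring
        rw [e]
        refine ⟨by nlinarith, by nlinarith, by nlinarith, by nlinarith⟩
      · rw [pt0', pt1', hline]
        have e : x 1 - l = 1 + m * (x 0 - 1) := by rw [hldef]; ring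
        rw [e]
    refine Metric.mem_cthickening_of_dist_le x _ ε _ hz ?_
    rw [dist_eq2, pt0', pt1']
    have e1 : x 1 - (x 1 - l) = l := by ring
    rw [e1]
    have e2 : (x 0 - x 0)^2 + l^2 = l^2 := by ring
    rw [e2, Real.sqrt_sq hc.le]
    linarith

lemma lineK2 (h1 : 1 < v 0) (h2 : v 0 ≤ 2) (hv : v 1 = 3 - v 0 / 2) (hε : 0 < ε)
    {x : E2} (hx : x ∈ SPD) (hx0 : x 0 ≤ v 0) (hx1 : 1 ≤ x 1)
    (hl : -ε ≤ x 1 - (1 + (v 1 - 1) / (v 0 - 1) * (x 0 - 1))) : x ∈ K2 v ε := by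
  set m := (v 1 - 1) / (v 0 - 1) with hm
  have hmv : 1 ≤ m := slope_pos h1 h2 hv
  have hline : m * x 0 + (v 0 - v 1)/(v 0 - 1) = 1 + m * (x 0 - 1) := by
    rw [intercept_eq h1]; ring
  refine ⟨?_, hx, hx0, hx1⟩
  set l := x 1 - (1 + m * (x 0 - 1)) with hldef
  obtain ⟨s1, s2, s3, s4⟩ := mem_SPD_iff.1 hx
  by_cases hc : 0 ≤ l
  · apply Metric.self_subset_cthickening
    exact ⟨hx, by rw [hline]; linarith⟩
  · push_neg at hc
    have hxge1 : 1 ≤ x 0 := by nlinarith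
    have hmv0 : m * (v 0 - 1) = v 1 - 1 := by
      rw [hm]; exact div_mul_cancel₀ _ (by linarith)
    have hub : m * (x 0 - 1) ≤ m * (v 0 - 1) := by nlinarith
    have hlb : 0 ≤ m * (x 0 - 1) := by nlinarith
    have hz : pt (x 0) (x 1 - l) ∈ T2 v := by
      constructor
      · rw [mem_SPD_iff]
        rw [pt0', pt1']
        have e : x 1 - l = 1 + m * (x 0 - 1) := by rw [hldef]; ring
        rw [e]
        refine ⟨by linarith, by nlinarith, by linarith, by nlinarith⟩
      · rw [pt0', pt1', hline]
        have e : x 1 - l = 1 + m * (x 0 - 1) := by rw [hldef]; ring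
        rw [e]
    refine Metric.mem_cthickening_of_dist_le x _ ε _ hz ?_
    rw [dist_eq2, pt0', pt1']
    have e1 : x 1 - (x 1 - l) = l := by ring
    rw [e1]
    have e2 : (x 0 - x 0)^2 + l^2 = (-l)^2 := by ring
    rw [e2, Real.sqrt_sq (by linarith)]
    linarith

/-- at least one of the two players cooperates -/
lemma factE {a b : E2} (ha1 : 1 < a 0) (hab : a 0 < b 0) (hb2 : b 0 ≤ 2)
    (hva : a 1 = 3 - a 0 / 2) (hvb : b 1 = 3 - b 0 / 2)
    {ε₁ ε₂ : ℝ} (hε₁ : 0 < ε₁) (hε₂ : 0 < ε₂)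
    {x : E2} (hx : x ∈ SPD) : x ∈ K1 a ε₁ ∨ x ∈ K2 b ε₂ := by
  have ha2 : a 0 ≤ 2 := by linarith
  have hb1 : 1 < b 0 := by linarith
  set ma := (a 1 - 1) / (a 0 - 1) with hma
  set mb := (b 1 - 1) / (b 0 - 1) with hmb
  have hmav : 1 ≤ ma := slope_pos ha1 ha2 hva
  have hmbv : 1 ≤ mb := slope_pos hb1 hb2 hvb
  have hmaq : ma * (a 0 - 1) = a 1 - 1 := by
    rw [hma]; exact div_mul_cancel₀ _ (by linarith)
  have hmbq : mb * (b 0 - 1) = b 1 - 1 := by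
    rw [hmb]; exact div_mul_cancel₀ _ (by linarith)
  have hmm : mb ≤ ma := by
    rw [hma, hmb, div_le_div_iff₀ (by linarith) (by linarith)]
    nlinarith
  obtain ⟨s1, s2, s3, s4⟩ := mem_SPD_iff.1 hx
  by_cases hk : x ∈ K1 a ε₁
  · exact Or.inl hk
  right
  by_cases hc0 : x 0 < 1
  · have hy1 : 1 < x 1 := by linarith
    have hneg : mb * (x 0 - 1) ≤ (x 0 - 1) := by nlinarith
    exact lineK2 hb1 hb2 hvb hε₂ hx (by linarith) hy1.le (by linarith)
  push_neg at hc0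
  by_cases hc1 : a 1 < x 1
  · have ha12 : 2 ≤ a 1 := by rw [hva]; linarith
    have hxa : x 0 < a 0 := by rw [hva] at hc1; linarith
    have h1 : mb * (x 0 - 1) ≤ mb * (b 0 - 1) := by nlinarith
    have h3 : b 1 < a 1 := by rw [hva, hvb]; linarith
    exact lineK2 hb1 hb2 hvb hε₂ hx (by linarith) (by linarith) (by linarith)
  push_neg at hc1
  have hla : ε₁ < x 1 - (1 + ma * (x 0 - 1)) := by
    by_contra hcon
    push_neg at hcon
    exact hk (lineK1 ha1 ha2 hva hε₁ hx hc0 hc1 hcon)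
  have hnn : 0 ≤ ma * (x 0 - 1) := by nlinarith
  have hxb : x 0 ≤ a 0 := by
    by_contra hcon
    push_neg at hcon
    have h5 : ma * (a 0 - 1) < ma * (x 0 - 1) := by nlinarith
    linarith
  have h6 : mb * (x 0 - 1) ≤ ma * (x 0 - 1) := by nlinarith
  exact lineK2 hb1 hb2 hvb hε₂ hx (by linarith) (by linarith) (by linarith)
end geom

lemma semi1_iff (v : E2) (ε : ℝ) (x : E2) : semi1 v ε x = true ↔ x ∈ K1 v ε := by
  by_cases h : x ∈ K1 v ε <;> simp [semi1, h]

lemma semi2_iff (v : E2) (ε : ℝ) (x : E2) : semi2 v ε x = true ↔ x ∈ K2 v ε := by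
  by_cases h : x ∈ K2 v ε <;> simp [semi2, h]

lemma payoff_mem (p q : Bool) : payoffPD p q ∈ SPD := by
  cases p <;> cases q <;> exact subset_convexHull ℝ _ (by simp [payoffPD])

end auxiliary

set_option maxHeartbeats 2000000 in
/-- Theorem 4.2, case a₁ < b₁ ≤ 2: if player 1 plays the semi-cooperative strategy
determined by a and player 2 the one determined by b, with a₁ < b₁ ≤ 2, then every
trajectory of average payoffs, from any initial point in 𝔖, converges to b. -/
theorem stmt14 (a b : E2) (ha : a ∈ BPD) (ha1 : a ≠ pt 1 (5 / 2)) (ha2 : a ≠ pt (5 / 2) 1)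
    (hb : b ∈ BPD) (hb1 : b ≠ pt 1 (5 / 2)) (hb2 : b ≠ pt (5 / 2) 1)
    (ε₁ ε₂ : ℝ) (hε₁ : 0 < ε₁) (hε₂ : 0 < ε₂)
    (hab : a 0 < b 0) (hb2' : b 0 ≤ 2) (x : ℕ → E2)
    (hx : IsTrajPD (fun p => payoffPD (semi1 a ε₁ p) (semi2 b ε₂ p)) x) :
    Tendsto x atTop (nhds b) := by
  obtain ⟨hx1S, hxrec⟩ := hx
  -- ### forms of a and b
  obtain ⟨ha0, haf⟩ : 1 < a 0 ∧ a 1 = 3 - a 0 / 2 := by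
    rcases ha with ⟨xa, h1, h2, rfl⟩ | ⟨ya, h1, h2, rfl⟩
    · rw [pt0', pt1']
      refine ⟨?_, rfl⟩
      rcases eq_or_lt_of_le h1 with h | h
      · exfalso
        apply ha1
        rw [← h]
        norm_num
      · exact h
    · exfalso
      rw [pt0'] at hab
      linarith
  obtain ⟨hb0, hbf⟩ : 1 < b 0 ∧ b 1 = 3 - b 0 / 2 := by
    rcases hb with ⟨xb, h1, h2, rfl⟩ | ⟨yb, h1, h2, rfl⟩
    · rw [pt0', pt1']
      refine ⟨?_, rfl⟩
      rcases eq_or_lt_of_le h1 with h | h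
      · exfalso
        apply hb1
        rw [← h]
        norm_num
      · exact h
    · rw [pt0'] at hb2' ⊢
      rw [pt1']
      constructor
      · linarith
      · have : yb = 2 := by linarith
        rw [this]; norm_num
  have hab2 : a 0 < 2 := lt_of_lt_of_le hab hb2'
  -- slopes
  set ma := (a 1 - 1) / (a 0 - 1) with hma
  set mb := (b 1 - 1) / (b 0 - 1) with hmb
  have hmav : 1 ≤ ma := slope_pos ha0 hab2.le haf
  have hmbv : 1 ≤ mb := slope_pos hb0 hb2' hbf
  have hmaq : ma * (a 0 - 1) = a 1 - 1 := by
    rw [hma]; exact div_mul_cancel₀ _ (by linarith)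
  have hmbq : mb * (b 0 - 1) = b 1 - 1 := by
    rw [hmb]; exact div_mul_cancel₀ _ (by linarith)
  have hmm : mb ≤ ma := by
    rw [hma, hmb, div_le_div_iff₀ (by linarith) (by linarith)]
    nlinarith
  set A := 1 + 2 * ma with hAdef
  set B := 1 + 2 * mb with hBdef
  have hA3 : A * (a 0 - 1) = 3 := by rw [hAdef]; nlinarith
  have hB3 : B * (b 0 - 1) = 3 := by rw [hBdef]; nlinarith
  have hAB : B ≤ A := by rw [hAdef, hBdef]; linarith
  have hB1 : 3 ≤ B := by
    rw [hBdef]; linarith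
  have hA1 : 3 ≤ A := le_trans hB1 hAB
  have ha1v : 2 < a 1 := by rw [haf]; linarith
  have hb1v : 2 ≤ b 1 := by rw [hbf]; linarith
  clear_value B A mb ma
  -- ### sequences
  set X : ℕ → ℝ := fun t => x t 0 with hXdef
  set Y : ℕ → ℝ := fun t => x t 1 with hYdef
  set G0 : ℕ → ℝ := fun t => payoffPD (semi1 a ε₁ (x t)) (semi2 b ε₂ (x t)) 0 with hG0def
  set G1 : ℕ → ℝ := fun t => payoffPD (semi1 a ε₁ (x t)) (semi2 b ε₂ (x t)) 1 with hG1def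
  -- membership of the trajectory in SPD
  have hSmem : ∀ t, 1 ≤ t → x t ∈ SPD := by
    intro t ht
    induction t, ht using Nat.le_induction with
    | base => exact hx1S
    | succ n hn ih =>
      rw [hxrec n hn]
      have hFx : payoffPD (semi1 a ε₁ (x n)) (semi2 b ε₂ (x n)) ∈ SPD := payoff_mem _ _
      have heq : ((n:ℝ)+1)⁻¹ • ((n:ℝ) • x n + payoffPD (semi1 a ε₁ (x n)) (semi2 b ε₂ (x n)))
          = ((n:ℝ)/((n:ℝ)+1)) • x n
            + (((n:ℝ)+1)⁻¹) • payoffPD (semi1 a ε₁ (x n)) (semi2 b ε₂ (x n)) := by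
        rw [smul_add, smul_smul]
        congr 2
        rw [div_eq_inv_mul]
      rw [heq]
      exact (convex_convexHull ℝ _) ih hFx (by positivity) (by positivity) (by field_simp)
  have hIneq : ∀ t, 1 ≤ t → 3 ≤ 2*X t + Y t ∧ 2*X t + Y t ≤ 6 ∧ 3 ≤ X t + 2*Y t ∧
      X t + 2*Y t ≤ 6 := fun t ht => mem_SPD_iff.1 (hSmem t ht)
  have hXbd : ∀ t, 1 ≤ t → 0 ≤ X t ∧ X t ≤ 3 ∧ 0 ≤ Y t ∧ Y t ≤ 3 := by
    intro t ht
    obtain ⟨h1, h2, h3, h4⟩ := hIneq t ht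
    refine ⟨by linarith, by linarith, by linarith, by linarith⟩
  have hG0bd : ∀ t, 0 ≤ G0 t ∧ G0 t ≤ 3 := by
    intro t
    simp only [hG0def]
    cases h1 : semi1 a ε₁ (x t) <;> cases h2 : semi2 b ε₂ (x t) <;>
      norm_num [h1, h2, payoffPD, pt0', pt1']
  have hG1bd : ∀ t, 0 ≤ G1 t ∧ G1 t ≤ 3 := by
    intro t
    simp only [hG1def]
    cases h1 : semi1 a ε₁ (x t) <;> cases h2 : semi2 b ε₂ (x t) <;>
      norm_num [h1, h2, payoffPD, pt0', pt1']
  -- coordinate recursions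
  have hrec0 : ∀ t, 1 ≤ t → X (t+1) = ((t:ℝ) * X t + G0 t)/((t:ℝ)+1) := by
    intro t ht
    show x (t+1) 0 = _
    rw [hxrec t ht]
    simp only [PiLp.smul_apply, PiLp.add_apply, smul_eq_mul]
    rw [inv_mul_eq_div]
  have hrec1 : ∀ t, 1 ≤ t → Y (t+1) = ((t:ℝ) * Y t + G1 t)/((t:ℝ)+1) := by
    intro t ht
    show x (t+1) 1 = _
    rw [hxrec t ht]
    simp only [PiLp.smul_apply, PiLp.add_apply, smul_eq_mul]
    rw [inv_mul_eq_div]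
  -- action facts
  have hfE : ∀ t, 1 ≤ t → semi1 a ε₁ (x t) = true ∨ semi2 b ε₂ (x t) = true := by
    intro t ht
    rcases factE ha0 hab hb2' haf hbf hε₁ hε₂ (hSmem t ht) with h | h
    · exact Or.inl ((semi1_iff _ _ _).2 h)
    · exact Or.inr ((semi2_iff _ _ _).2 h)
  have hP1C : ∀ t, 1 ≤ t → 1 ≤ X t → Y t ≤ a 1 → Y t - (1 + ma * (X t - 1)) ≤ ε₁ →
      semi1 a ε₁ (x t) = true := by
    intro t ht h1 h2 h3
    exact (semi1_iff _ _ _).2 (lineK1 ha0 hab2.le haf hε₁ (hSmem t ht) h1 h2 (by rw [← hma]; exact h3))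
  have hP2C : ∀ t, 1 ≤ t → X t ≤ b 0 → 1 ≤ Y t → -ε₂ ≤ Y t - (1 + mb * (X t - 1)) →
      semi2 b ε₂ (x t) = true := by
    intro t ht h1 h2 h3
    exact (semi2_iff _ _ _).2 (lineK2 hb0 hb2' hbf hε₂ (hSmem t ht) h1 h2 (by rw [← hmb]; exact h3))
  have hK1need : ∀ t, semi1 a ε₁ (x t) = true → 1 ≤ X t ∧ Y t ≤ a 1 := by
    intro t h
    obtain ⟨-, -, h1, h2⟩ := (semi1_iff _ _ _).1 h
    exact ⟨h1, h2⟩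
  have hK2need : ∀ t, semi2 b ε₂ (x t) = true → X t ≤ b 0 ∧ 1 ≤ Y t := by
    intro t h
    obtain ⟨-, -, h1, h2⟩ := (semi2_iff _ _ _).1 h
    exact ⟨h1, h2⟩
  -- payoff values
  have hG0_2 : ∀ t, semi2 b ε₂ (x t) = true → 2 ≤ G0 t := by
    intro t h
    simp only [hG0def]
    cases h1 : semi1 a ε₁ (x t) <;> norm_num [h1, h, payoffPD, pt0', pt1']
  have hG0_0 : ∀ t, 1 ≤ t → semi2 b ε₂ (x t) = false → G0 t = 0 := by
    intro t ht h
    have h1 : semi1 a ε₁ (x t) = true := by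
      rcases hfE t ht with h' | h'
      · exact h'
      · rw [h'] at h; exact absurd h (by simp)
    simp only [hG0def]; norm_num [h1, h, payoffPD, pt0', pt1']
  have hG1_2 : ∀ t, semi1 a ε₁ (x t) = true → 2 ≤ G1 t := by
    intro t h
    simp only [hG1def]
    cases h2 : semi2 b ε₂ (x t) <;> norm_num [h, h2, payoffPD, pt0', pt1']
  have hG1_0 : ∀ t, 1 ≤ t → semi1 a ε₁ (x t) = false → G1 t = 0 := by
    intro t ht h
    have h2 : semi2 b ε₂ (x t) = true := by
      rcases hfE t ht with h' | h'
      · rw [h'] at h; exact absurd h (by simp)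
      · exact h'
    simp only [hG1def]; norm_num [h, h2, payoffPD, pt0', pt1']
  have hGW_0 : ∀ t, semi1 a ε₁ (x t) = true → 6 - G0 t - 2 * G1 t = 0 := by
    intro t h
    simp only [hG0def, hG1def]
    cases h2 : semi2 b ε₂ (x t) <;> norm_num [h, h2, payoffPD, pt0', pt1']
  have hGS_3 : ∀ t, 1 ≤ t → 3 ≤ G0 t + G1 t := by
    intro t ht
    simp only [hG0def, hG1def]
    rcases hfE t ht with h | h
    · cases h2 : semi2 b ε₂ (x t) <;> norm_num [h, h2, payoffPD, pt0', pt1']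
    · cases h1 : semi1 a ε₁ (x t) <;> norm_num [h, h1, payoffPD, pt0', pt1']
  -- ### E1 : eventually X ≤ b 0 + δ
  have E1 : ∀ δ : ℝ, 0 < δ → ∃ T, ∀ t, T ≤ t → X t ≤ b 0 + δ := by
    intro δ hδ
    obtain ⟨T', hT'⟩ := driftUp X G0 15 (b 0) 0 1 hrec0
      (fun t ht => by have := (hXbd t ht).1; linarith)
      (fun t ht => by have := (hXbd t ht).2.1; linarith)
      (fun t ht => by have := (hG0bd t).2; linarith)
      (fun t ht hgt => by
        have h2 : semi2 b ε₂ (x t) = false := by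
          cases hs : semi2 b ε₂ (x t)
          · rfl
          · exact absurd (hK2need t hs).1 (by linarith)
        rw [hG0_0 t ht h2])
      hδ
    refine ⟨T', fun t ht => ?_⟩
    have h := hT' t ht
    rwa [max_eq_left (by linarith)] at h
  -- ### E3 : eventually 3 - δ ≤ X + Y
  have E3 : ∀ δ : ℝ, 0 < δ → ∃ T, ∀ t, T ≤ t → 3 - δ ≤ X t + Y t := by
    intro δ hδ
    have hrecS : ∀ t, 1 ≤ t → (fun s => X s + Y s) (t+1)
        = ((t:ℝ) * ((fun s => X s + Y s) t) + (fun s => G0 s + G1 s) t)/((t:ℝ)+1) := by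
      intro t ht
      simp only
      rw [hrec0 t ht, hrec1 t ht]
      have hne : ((t:ℝ)+1) ≠ 0 := by positivity
      field_simp
      ring
    obtain ⟨T', hT'⟩ := driftDown (fun s => X s + Y s) (fun s => G0 s + G1 s) 15 3 3 1
      hrecS
      (fun t ht => by have h := hXbd t ht; linarith [h.1, h.2.2.1])
      (fun t ht => by have h := hXbd t ht; linarith [h.2.1, h.2.2.2])
      (fun t ht => by have h0 := (hG0bd t).1; have h1 := (hG1bd t).1; linarith)
      (fun t ht _ => hGS_3 t ht)
      hδ
    refine ⟨T', fun t ht => ?_⟩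
    have h := hT' t ht
    simp only [min_self] at h
    exact h
  -- ### E4 : eventually 1 + η ≤ Y
  set η := min ε₁ 1 / 4 with hηdef
  have hη : 0 < η := by
    have : 0 < min ε₁ 1 := lt_min hε₁ one_pos
    rw [hηdef]; linarith
  have hη1 : η ≤ 1/4 := by
    have : min ε₁ 1 ≤ 1 := min_le_right _ _
    rw [hηdef]; linarith
  have E4 : ∃ T, ∀ t, T ≤ t → 1 + η ≤ Y t := by
    obtain ⟨T3, hT3⟩ := E3 (1/4) (by norm_num)
    have hminε : min ε₁ 1 ≤ ε₁ := min_le_left _ _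
    have hmin1 : min ε₁ 1 ≤ 1 := min_le_right _ _
    have hmin0 : 0 < min ε₁ 1 := lt_min hε₁ one_pos
    obtain ⟨T', hT'⟩ := driftDown Y G1 15 (1 + min ε₁ 1 / 2) 2 (max T3 1)
      (fun t ht => hrec1 t (le_trans (le_max_right _ _) ht))
      (fun t ht => by
        have h := hXbd t (le_trans (le_max_right _ _) ht); linarith [h.2.2.1])
      (fun t ht => by
        have h := hXbd t (le_trans (le_max_right _ _) ht); linarith [h.2.2.2])
      (fun t ht => by have h1 := (hG1bd t).1; linarith)
      (fun t ht hlt => by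
        have ht1 : 1 ≤ t := le_trans (le_max_right _ _) ht
        have hS := hT3 t (le_trans (le_max_left _ _) ht)
        have hX1 : 1 ≤ X t := by linarith
        have hma0 : 0 ≤ ma * (X t - 1) := mul_nonneg (by linarith) (by linarith)
        have h1 : semi1 a ε₁ (x t) = true :=
          hP1C t ht1 hX1 (by linarith) (by linarith)
        exact hG1_2 t h1)
      hη
    refine ⟨T', fun t ht => ?_⟩
    have h := hT' t ht
    rw [min_eq_left (by linarith)] at h
    rw [hηdef] at h ⊢
    linarith
  obtain ⟨T4, hT4⟩ := E4
  -- ### the SS predicate and auxiliary drift machines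
  set SS : ℝ → Prop := fun ξ => ∀ δ : ℝ, 0 < δ → ∃ T, ∀ t, T ≤ t → 1 + ξ - δ ≤ X t
    with hSSdef
  have hSSmono : ∀ ξ ξ', ξ' ≤ ξ → SS ξ → SS ξ' := by
    intro ξ ξ' hle hS δ hδ
    obtain ⟨T, hT⟩ := hS δ hδ
    exact ⟨T, fun t ht => by have := hT t ht; linarith⟩
  -- the W machine
  have Wlem : ∀ ξ e : ℝ, 0 < e → e < ξ → (∃ T, ∀ t, T ≤ t → 1 + ξ - e ≤ X t) →
      ∃ T, ∀ t, T ≤ t → 6 - X t - 2*Y t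
        ≤ max (max (3 - 2*ε₁ - A*(ξ-e)) (a 0 - 1 - ξ + e)) 0 + e := by
    rintro ξ e he heξ ⟨Ta, hTa⟩
    set θw := max (max (3 - 2*ε₁ - A*(ξ-e)) (a 0 - 1 - ξ + e)) 0 with hθw
    have hrecW : ∀ t, max Ta 1 ≤ t → (fun s => 6 - X s - 2*Y s) (t+1)
        = ((t:ℝ) * ((fun s => 6 - X s - 2*Y s) t) + (fun s => 6 - G0 s - 2*G1 s) t)/((t:ℝ)+1) := by
      intro t ht
      have ht1 : 1 ≤ t := le_trans (le_max_right _ _) ht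
      simp only
      rw [hrec0 t ht1, hrec1 t ht1]
      have hne : ((t:ℝ)+1) ≠ 0 := by positivity
      field_simp
      ring
    obtain ⟨T', hT'⟩ := driftUp (fun s => 6 - X s - 2*Y s) (fun s => 6 - G0 s - 2*G1 s)
        15 θw 0 (max Ta 1) hrecW
      (fun t ht => by
        have h := hXbd t (le_trans (le_max_right _ _) ht)
        linarith [h.2.1, h.2.2.2])
      (fun t ht => by
        have h := hIneq t (le_trans (le_max_right _ _) ht)
        linarith [h.2.2.1])
      (fun t ht => by
        have h0 := (hG0bd t).1; have h1 := (hG1bd t).1; linarith)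
      (fun t ht hgt => by
        have ht1 : 1 ≤ t := le_trans (le_max_right _ _) ht
        have hXl := hTa t (le_trans (le_max_left _ _) ht)
        have h1 : semi1 a ε₁ (x t) = true := by
          cases hs : semi1 a ε₁ (x t)
          · exfalso
            have hnk : x t ∉ K1 a ε₁ := by
              intro hm
              rw [(semi1_iff _ _ _).2 hm] at hs
              exact Bool.noConfusion hs
            have hX1 : 1 ≤ X t := by linarith
            by_cases hY : Y t ≤ a 1
            · have hla : ε₁ < Y t - (1 + ma * (X t - 1)) := by
                by_contra hcon
                push_neg at hcon
                exact hnk (lineK1 ha0 hab2.le haf hε₁ (hSmem t ht1) hX1 hY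
                  (by rw [← hma]; exact hcon))
              have h5 : A*(ξ-e) ≤ A*(X t - 1) :=
                mul_le_mul_of_nonneg_left (by linarith) (by linarith)
              have hup : 3 - 2*ε₁ - A*(ξ-e) ≤ θw :=
                le_trans (le_max_left _ _) (le_max_left _ _)
              have hAx : A*(X t - 1) = (X t - 1) + 2*(ma*(X t -1)) := by
                rw [hAdef]; ring
              linarith only [hgt, hla, h5, hup, hAx]
            · push_neg at hY
              rw [haf] at hY
              have hup : a 0 - 1 - ξ + e ≤ θw :=
                le_trans (le_max_right _ _) (le_max_left _ _)
              linarith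
          · rfl
        have := hGW_0 t h1
        linarith)
      he
    refine ⟨T', fun t ht => ?_⟩
    have h := hT' t ht
    rwa [max_eq_left (le_max_right _ _)] at h
  -- the X machine
  have Xlem : ∀ ω e : ℝ, 0 < e → e ≤ ε₂ → (∃ T, ∀ t, T ≤ t → 6 - X t - 2*Y t ≤ ω) →
      ∃ T, ∀ t, T ≤ t → b 0 - (max (ω - 2*ε₂) 0)/B - e ≤ X t := by
    rintro ω e he heε ⟨Tb, hTb⟩
    have hBpos : (0:ℝ) < B := by linarith
    set θ0 := b 0 - (max (ω - 2*ε₂) 0)/B with hθ0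
    clear_value θ0
    have hθ0b : θ0 ≤ b 0 := by
      have h0 : 0 ≤ (max (ω - 2*ε₂) 0)/B := by positivity
      rw [hθ0]; linarith
    have hmbq' : mb * (b 0 - 1) = 2 - b 0/2 := by rw [hmbq, hbf]; ring
    obtain ⟨T', hT'⟩ := driftDown X G0 15 θ0 2 (max (max Tb T4) 1)
      (fun t ht => hrec0 t (le_trans (le_max_right _ _) ht))
      (fun t ht => by
        have h := hXbd t (le_trans (le_max_right _ _) ht); linarith [h.1])
      (fun t ht => by
        have h := hXbd t (le_trans (le_max_right _ _) ht); linarith [h.2.1])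
      (fun t ht => by have h0 := (hG0bd t).1; linarith)
      (fun t ht hlt => by
        have ht1 : 1 ≤ t := le_trans (le_max_right _ _) ht
        have hW := hTb t (le_trans (le_trans (le_max_left _ _) (le_max_left _ _)) ht)
        have hY := hT4 t (le_trans (le_trans (le_max_right _ _) (le_max_left _ _)) ht)
        have h2 : semi2 b ε₂ (x t) = true := by
          apply hP2C t ht1 (by linarith) (by linarith)
          have hid : Y t - (1 + mb*(X t - 1)) = (B*(b 0 - X t) - (6 - X t - 2*Y t))/2 := by
            rw [hBdef]
            linear_combination -hmbq'
          rw [hid]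
          have h6 : B*(b 0 - θ0) = max (ω - 2*ε₂) 0 := by
            rw [hθ0]
            field_simp
            ring
          have h7 : B*(b 0 - θ0) ≤ B*(b 0 - X t) :=
            mul_le_mul_of_nonneg_left (by linarith) hBpos.le
          have h8 : ω - 2*ε₂ ≤ max (ω-2*ε₂) 0 := le_max_left _ _
          linarith only [h6, h7, h8, hW]
        exact hG0_2 t h2)
      he
    refine ⟨T', fun t ht => ?_⟩
    have h := hT' t ht
    rw [min_eq_left (by linarith : θ0 ≤ 2)] at h
    rw [hθ0] at h
    rw [hθ0]
    exact h
  -- ### base : SS ξ0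
  have hmb0 : (0:ℝ) < mb := by linarith
  set ξ0 := min (η/mb) (b 0 - 1) with hξ0def
  clear_value ξ0
  have hξ0pos : 0 < ξ0 := by
    rw [hξ0def]; exact lt_min (div_pos hη hmb0) (by linarith)
  have hξ0le : ξ0 ≤ b 0 - 1 := by rw [hξ0def]; exact min_le_right _ _
  have hbase : SS ξ0 := by
    intro δ hδ
    obtain ⟨T', hT'⟩ := driftDown X G0 15 (1 + ξ0) 2 (max T4 1)
      (fun t ht => hrec0 t (le_trans (le_max_right _ _) ht))
      (fun t ht => by
        have h := hXbd t (le_trans (le_max_right _ _) ht); linarith [h.1])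
      (fun t ht => by
        have h := hXbd t (le_trans (le_max_right _ _) ht); linarith [h.2.1])
      (fun t ht => by have h0 := (hG0bd t).1; linarith)
      (fun t ht hlt => by
        have ht1 : 1 ≤ t := le_trans (le_max_right _ _) ht
        have hY := hT4 t (le_trans (le_max_left _ _) ht)
        have h2 : semi2 b ε₂ (x t) = true := by
          apply hP2C t ht1 (by linarith) (by linarith)
          have hmbξ : mb * ξ0 ≤ η := by
            have h1 : ξ0 ≤ η/mb := by rw [hξ0def]; exact min_le_left _ _
            calc mb * ξ0 ≤ mb * (η/mb) := mul_le_mul_of_nonneg_left h1 hmb0.le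
            _ = η := by field_simp
          rcases le_total (X t) 1 with hc | hc
          · have h9 : mb * (X t - 1) ≤ 0 := mul_nonpos_of_nonneg_of_nonpos hmb0.le (by linarith)
            linarith
          · have h9 : mb * (X t - 1) ≤ mb * ξ0 :=
              mul_le_mul_of_nonneg_left (by linarith) hmb0.le
            linarith
        exact hG0_2 t h2)
      hδ
    refine ⟨T', fun t ht => ?_⟩
    have h := hT' t ht
    rw [min_eq_left (by linarith : 1 + ξ0 ≤ 2)] at h
    linarith
  -- ### the inductive step
  set Δ := min ((ε₁+ε₂)/B) ((b 0 - a 0)/2) with hΔdef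
  clear_value Δ
  have hΔpos : 0 < Δ := by
    rw [hΔdef]
    exact lt_min (div_pos (by linarith) (by linarith)) (by linarith)
  have hstep : ∀ ξ, 0 < ξ → ξ ≤ b 0 - 1 → SS ξ → SS (min (ξ + Δ) (b 0 - 1)) := by
    intro ξ hξ hξb hS δ hδ
    have hABpos : (0:ℝ) < A + B + 4 := by linarith
    have hmin3 : 0 < min (min δ ε₂) (ξ/2) := lt_min (lt_min hδ hε₂) (by linarith)
    set e := min (min δ ε₂) (ξ/2) / (A + B + 4) with hedef
    clear_value e
    have hepos : 0 < e := by rw [hedef]; positivity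
    have hekey : e * (A + B + 4) = min (min δ ε₂) (ξ/2) := by
      rw [hedef]; field_simp
    have heδ : e * (A + B + 4) ≤ δ := by
      rw [hekey]; exact le_trans (min_le_left _ _) (min_le_left _ _)
    have heε : e * (A + B + 4) ≤ ε₂ := by
      rw [hekey]; exact le_trans (min_le_left _ _) (min_le_right _ _)
    have heξ : e * (A + B + 4) ≤ ξ/2 := by
      rw [hekey]; exact min_le_right _ _
    have hemul : 0 ≤ e * (A + B + 3) := mul_nonneg hepos.le (by linarith)
    have heδ' : e ≤ δ := by linarith only [hekey, hemul, heδ]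
    have heε' : e ≤ ε₂ := by linarith only [hekey, hemul, heε]
    have heξ' : e < ξ := by linarith only [hekey, hemul, heξ, hξ]
    obtain ⟨Tw, hTw⟩ := Wlem ξ e hepos heξ' (hS e hepos)
    obtain ⟨Tx, hTx⟩ := Xlem (max (max (3 - 2*ε₁ - A*(ξ-e)) (a 0 - 1 - ξ + e)) 0 + e)
      e hepos heε' ⟨Tw, hTw⟩
    refine ⟨Tx, fun t ht => ?_⟩
    have h := hTx t ht
    -- arithmetic : the new lower bound is good enough
    set P := 3 - 2*ε₁ - A*(ξ-e) with hP
    set Q := a 0 - 1 - ξ + e with hQ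
    clear_value P Q
    set θw := max (max P Q) 0 with hθw
    clear_value θw
    set mstar := max (θw + e - 2*ε₂) 0 with hmstar
    clear_value mstar
    have hBpos : (0:ℝ) < B := by linarith
    have harith : 1 + min (ξ + Δ) (b 0 - 1) - δ ≤ b 0 - mstar/B - e := by
      have hτ1 : min (ξ + Δ) (b 0 - 1) ≤ ξ + Δ := min_le_left _ _
      have hτ2 : min (ξ + Δ) (b 0 - 1) ≤ b 0 - 1 := min_le_right _ _
      have hΔ1 : Δ ≤ (ε₁+ε₂)/B := by rw [hΔdef]; exact min_le_left _ _
      have hΔ2 : Δ ≤ (b 0 - a 0)/2 := by rw [hΔdef]; exact min_le_right _ _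
      have hΔ1' : Δ * B ≤ ε₁ + ε₂ := (le_div_iff₀ hBpos).1 hΔ1
      rcases max_cases (θw + e - 2*ε₂) 0 with ⟨hm1, hm2⟩ | ⟨hm1, hm2⟩
      · -- mstar = θw + e − 2ε₂ > 0 case (≥ 0)
        rw [hmstar, hm1]
        rcases max_cases (max P Q) 0 with ⟨hw1, hw2⟩ | ⟨hw1, hw2⟩
        · -- θw = max P Q
          rcases max_cases P Q with ⟨hpq1, hpq2⟩ | ⟨hpq1, hpq2⟩
          · -- θw = P
            have hθP : θw = P := by rw [hθw, hw1, hpq1]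
            rw [hθP]
            have hgoal : (1 + min (ξ + Δ) (b 0 - 1) - δ) * B ≤ (b 0 - (P + e - 2*ε₂)/B - e) * B := by
              have hexp : (b 0 - (P + e - 2*ε₂)/B - e) * B
                  = B*(b 0 - 1) + B - (P + e - 2*ε₂) - e*B := by
                field_simp
                ring
              rw [hexp, hB3, hP]
              have l1 : (min (ξ + Δ) (b 0 - 1)) * B ≤ (ξ + Δ) * B :=
                mul_le_mul_of_nonneg_right (min_le_left _ _) hBpos.le
              have l3 : B * ξ ≤ A * ξ := mul_le_mul_of_nonneg_right hAB hξ.le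
              have l4 : δ ≤ B * δ := le_mul_of_one_le_left hδ.le (by linarith)
              linarith only [l1, hΔ1', l3, l4, heδ, hepos, hε₁, hε₂]
            exact le_of_mul_le_mul_right hgoal hBpos
          · -- θw = Q
            have hθQ : θw = Q := by rw [hθw, hw1, hpq1]
            rw [hθQ]
            have hQ0 : 0 ≤ Q := by rw [← hθQ, hθw]; exact le_max_right _ _
            have hξa : ξ ≤ a 0 - 1 + e := by rw [hQ] at hQ0; linarith
            have hgoal : (1 + min (ξ + Δ) (b 0 - 1) - δ) * B ≤ (b 0 - (Q + e - 2*ε₂)/B - e) * B := by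
              have hexp : (b 0 - (Q + e - 2*ε₂)/B - e) * B
                  = B*(b 0 - 1) + B - (Q + e - 2*ε₂) - e*B := by
                field_simp
                ring
              rw [hexp, hB3, hQ]
              have q1 : (min (ξ + Δ) (b 0 - 1)) * B ≤ (ξ + Δ) * B :=
                mul_le_mul_of_nonneg_right (min_le_left _ _) hBpos.le
              have q2 : Δ * B ≤ ((b 0 - a 0)/2) * B :=
                mul_le_mul_of_nonneg_right hΔ2 hBpos.le
              have q3 : ξ * (B - 1) ≤ (a 0 - 1 + e) * (B - 1) :=
                mul_le_mul_of_nonneg_right hξa (by linarith)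
              have q5 : δ ≤ B * δ := le_mul_of_one_le_left hδ.le (by linarith)
              have q6 : e * B ≤ e * A := mul_le_mul_of_nonneg_left hAB hepos.le
              have r1 : 0 ≤ (b 0 - a 0) * B := mul_nonneg (by linarith) hBpos.le
              linarith only [q1, q2, q3, heδ, q5, q6, hB3, r1, hε₂.le, hepos.le]
            exact le_of_mul_le_mul_right hgoal hBpos
        · -- θw = 0 : mstar = e − 2ε₂ ≥ 0, contradiction with e ≤ ε₂
          exfalso
          rw [hθw, hw1] at hm2
          linarith
      · -- mstar = 0
        rw [hmstar, hm1]
        have : (0:ℝ)/B = 0 := by simp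
        rw [this]
        linarith
    linarith
  -- ### iterate the step
  have hiter : ∀ n : ℕ, SS (min (ξ0 + n * Δ) (b 0 - 1)) := by
    intro n
    induction n with
    | zero =>
      simp only [Nat.cast_zero, zero_mul, add_zero]
      rw [min_eq_left hξ0le]
      exact hbase
    | succ n ih =>
      have hpos : 0 < min (ξ0 + n * Δ) (b 0 - 1) := by
        apply lt_min
        · have : (0:ℝ) ≤ n * Δ := by positivity
          linarith
        · linarith
      have h := hstep _ hpos (min_le_right _ _) ih
      apply hSSmono _ _ ?_ h
      rcases le_total (ξ0 + n * Δ) (b 0 - 1) with hc | hc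
      · rw [min_eq_left hc]
        push_cast
        apply min_le_min_right
        linarith
      · rw [min_eq_right hc]
        have h1 : min (ξ0 + (n+1 : ℕ) * Δ) (b 0 - 1) ≤ b 0 - 1 := min_le_right _ _
        have h2 : b 0 - 1 ≤ min (b 0 - 1 + Δ) (b 0 - 1) := by
          apply le_min
          · linarith
          · linarith
        linarith
  have E6 : SS (b 0 - 1) := by
    obtain ⟨n, hn⟩ := exists_nat_ge ((b 0 - 1)/Δ)
    have h1 : b 0 - 1 ≤ ξ0 + n * Δ := by
      rw [div_le_iff₀ hΔpos] at hn
      linarith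
    have h := hiter n
    rwa [min_eq_right h1] at h
  -- ### E7 : W → 0
  have E7 : ∀ δ, 0 < δ → ∃ T, ∀ t, T ≤ t → 6 - X t - 2*Y t ≤ δ := by
    intro δ hδ
    set e := min (min δ (b 0 - a 0)) ((b 0 - 1)/2) with hedef
    have hepos : 0 < e := lt_min (lt_min hδ (by linarith)) (by linarith)
    have heδ : e ≤ δ := le_trans (min_le_left _ _) (min_le_left _ _)
    have heba : e ≤ b 0 - a 0 := le_trans (min_le_left _ _) (min_le_right _ _)
    have heb1 : e < b 0 - 1 := lt_of_le_of_lt (min_le_right _ _) (by linarith)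
    obtain ⟨Tw, hTw⟩ := Wlem (b 0 - 1) e hepos heb1 (E6 e hepos)
    refine ⟨Tw, fun t ht => ?_⟩
    have h := hTw t ht
    have hP0 : 3 - 2*ε₁ - A*((b 0 - 1)-e) ≤ 0 := by
      have hsplit : A * (a 0 - 1) + A * (b 0 - a 0 - e) = A*((b 0 - 1)-e) := by ring
      have hnn : 0 ≤ A * (b 0 - a 0 - e) := mul_nonneg (by linarith) (by linarith)
      linarith only [hsplit, hnn, hA3, hε₁]
    have hQ0 : a 0 - 1 - (b 0 - 1) + e ≤ 0 := by linarith
    rw [max_eq_right (by rw [max_le_iff]; exact ⟨hP0, hQ0⟩)] at h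
    linarith
  -- ### conclusion
  rw [Metric.tendsto_atTop]
  intro ε hε
  obtain ⟨Ta, hTa⟩ := E1 (ε/4) (by linarith)
  obtain ⟨Tb, hTb⟩ := E6 (ε/4) (by linarith)
  obtain ⟨Tc, hTc⟩ := E7 (ε/4) (by linarith)
  refine ⟨max (max (max Ta Tb) Tc) 1, fun t ht => ?_⟩
  have ht1 : 1 ≤ t := le_trans (le_max_right _ _) ht
  have h1 := hTa t (le_trans (le_trans (le_max_left _ _) (le_max_left _ _)) (le_trans (le_max_left _ _) ht))
  have h2 := hTb t (le_trans (le_trans (le_max_right _ _) (le_max_left _ _)) (le_trans (le_max_left _ _) ht))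
  have h3 := hTc t (le_trans (le_max_right _ _) (le_trans (le_max_left _ _) ht))
  have h4 := (hIneq t ht1).2.2.2
  have hXb' : |X t - b 0| ≤ ε/4 := by
    rw [abs_le]; constructor <;> linarith
  have hYb' : |Y t - b 1| ≤ ε/4 := by
    rw [hbf, abs_le]; constructor <;> linarith
  have hd : dist (x t) b ≤ ε/2 := by
    rw [dist_eq2]
    have hey : x t 0 = X t := rfl
    have hey' : x t 1 = Y t := rfl
    rw [hey, hey']
    have hsq : (X t - b 0)^2 + (Y t - b 1)^2 ≤ (ε/2)^2 := by
      have e1 : (X t - b 0)^2 ≤ (ε/4)^2 :=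
        sq_le_sq' (by linarith [(abs_le.1 hXb').1]) (abs_le.1 hXb').2
      have e2 : (Y t - b 1)^2 ≤ (ε/4)^2 :=
        sq_le_sq' (by linarith [(abs_le.1 hYb').1]) (abs_le.1 hYb').2
      nlinarith [sq_nonneg ε]
    calc Real.sqrt ((X t - b 0)^2 + (Y t - b 1)^2) ≤ Real.sqrt ((ε/2)^2) :=
          Real.sqrt_le_sqrt hsq
    _ = ε/2 := Real.sqrt_sq (by linarith)
  linarith
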